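/- Let f = (α_f, σ) ∈ G_n and let T = (α_T, τ) ∈ G_n be an involution with T f T⁻¹ = f⁻¹. Then for every j ∈ {1,…,n}: if τ(j) = j then 2·α_j(T) = 0 in 𝕋, and if τ(j) = σ(j) then 2·α_j(T) = 2·α_j(f) in 𝕋. -/

import Mathlib

abbrev Circle1 : Type := AddCircle (1 : ℝ)

abbrev Gn (n : ℕ) : Type := (Fin n → Circle1) × Equiv.Perm (Fin n)

namespace Gn
variable {n : ℕ}

noncomputable instance : Mul (Gn n) := ⟨fun f g => ⟨fun j => g.1 j + f.1 (g.2 j), f.2 * g.2⟩⟩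
noncomputable instance : One (Gn n) := ⟨⟨fun _ => 0, 1⟩⟩
noncomputable instance : Inv (Gn n) := ⟨fun f => ⟨fun j => -f.1 (f.2⁻¹ j), f.2⁻¹⟩⟩

noncomputable instance : Group (Gn n) where
  mul_assoc f g h := Prod.ext (funext fun j => (add_assoc _ _ _).symm) rfl
  one_mul f := Prod.ext (funext fun j => add_zero _) (one_mul _)
  mul_one f := Prod.ext (funext fun j => zero_add _) (mul_one _)
  inv_mul_cancel f := Prod.ext
    (funext fun j => show f.1 j + -f.1 (f.2⁻¹ (f.2 j)) = 0 by simp)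
    (inv_mul_cancel _)

@[simp] lemma mul_fst (f g : Gn n) (j : Fin n) : (f * g).1 j = g.1 j + f.1 (g.2 j) := rfl
@[simp] lemma mul_snd (f g : Gn n) : (f * g).2 = f.2 * g.2 := rfl
@[simp] lemma one_fst (j : Fin n) : (1 : Gn n).1 j = 0 := rfl
@[simp] lemma one_snd : (1 : Gn n).2 = 1 := rfl
@[simp] lemma inv_fst (f : Gn n) (j : Fin n) : (f⁻¹).1 j = -f.1 (f.2⁻¹ j) := rfl
@[simp] lemma inv_snd (f : Gn n) : (f⁻¹).2 = f.2⁻¹ := rfl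


end Gn

/-- If `T = (α_T, τ)` is an involution of `G_n` reversing `f = (α_f, σ)`, then for every `j`:
if `τ(j) = j` then `2 α_j(T) = 0`, and if `τ(j) = σ(j)` then `2 α_j(T) = 2 α_j(f)`. -/
theorem stmt2 {n : ℕ} (f T : Gn n) (hT : T * T = 1) (hrev : T * f * T⁻¹ = f⁻¹) :
    ∀ j : Fin n,
      (T.2 j = j → 2 • T.1 j = 0) ∧
      (T.2 j = f.2 j → 2 • T.1 j = 2 • f.1 j) := by
  intro j
  have h1 : ∀ i, T.1 i + T.1 (T.2 i) = 0 := fun i => congrFun (congrArg Prod.fst hT) i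
  have hτ : T.2 * T.2 = 1 := congrArg Prod.snd hT
  have hτinv : T.2⁻¹ = T.2 := by
    rw [← mul_one T.2⁻¹, ← hτ, ← mul_assoc, inv_mul_cancel, one_mul]
  have h2 : ∀ i, -T.1 (T.2⁻¹ i) + (f.1 (T.2⁻¹ i) + T.1 (f.2 (T.2⁻¹ i)))
      = -f.1 (f.2⁻¹ i) := fun i => congrFun (congrArg Prod.fst hrev) i
  constructor
  · intro hj
    have := h1 j
    rw [hj] at this
    rw [two_smul]
    exact this
  · intro hj
    have key := h2 (T.2 j)
    rw [hτinv] at key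
    have hjj : T.2 (T.2 j) = j := by
      have := congrFun (congrArg (fun p => p.toFun) hτ) j
      simpa using this
    rw [hjj] at key
    -- key : -T.1 j + (f.1 j + T.1 (f.2 j)) = -f.1 (f.2⁻¹ (T.2 j))
    rw [hj, Equiv.Perm.inv_def, Equiv.symm_apply_apply] at key
    have hT2 : T.1 (f.2 j) = -T.1 j := by
      have h := h1 j
      rw [hj] at h
      exact eq_neg_of_add_eq_zero_right h
    rw [hT2] at key
    rw [← sub_eq_zero] at key
    rw [two_smul, two_smul, ← sub_eq_zero]
    have e : (T.1 j + T.1 j) - (f.1 j + f.1 j)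
        = -((-T.1 j + (f.1 j + -T.1 j)) - (-f.1 j)) := by abel
    rw [e, key, neg_zero]
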